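/- For every context-free process given by a finite guarded recursive specification in Greibach normal form over TSP• (the sequential theory with the revised sequential composition), there exists a pushdown automaton M such that the transition system of the specification's initial name is strongly bisimilar to the pushdown process T(M). -/

import Mathlib

namespace Stmt13

/-- A finite guarded recursive specification in Greibach normal form over
TSP• : every name `X` is defined by `X = Σ_i α_i.ξ_i (+ 1)`, where each `ξ_i`
is a sequence of names and the optional `1`-summand is recorded by `tflag`. -/
structure GNF (A : Type) : Type 1 where
  V : Type
  finV : Finite V
  /-- the summands `α_i.ξ_i` of each name -/
  summands : V → List (A × List V)
  /-- whether the defining equation has the optional `+1` summand -/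
  tflag : V → Prop

variable {A : Type}

/-- The transition relation on sequences of names under the *revised*
sequential composition: the head name moves by expanding one of its summands;
the tail may only move if the head terminates and has no transitions
(no summands). -/
def TrSeq (G : GNF A) : List G.V → A → List G.V → Prop
  | [], _, _ => False
  | X :: ξ, a, r =>
      (∃ s ∈ G.summands X, s.1 = a ∧ r = s.2 ++ ξ) ∨
      (G.tflag X ∧ G.summands X = [] ∧ TrSeq G ξ a r)

/-- A sequence of names terminates iff all its names do. -/
def DnSeq (G : GNF A) (ξ : List G.V) : Prop := ∀ X ∈ ξ, G.tflag X

/-- A pushdown automaton (with the given input alphabet `A`). -/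
structure PDA (A : Type) : Type 1 where
  /-- states -/
  S : Type
  finS : Finite S
  /-- stack symbols -/
  D : Type
  finD : Finite D
  /-- the finite transition relation -/
  trans : Set (S × A × D × List D × S)
  finTrans : trans.Finite
  /-- initial state -/
  start : S
  /-- initial stack symbol -/
  Z : D
  /-- accepting states -/
  acc : Set S

/-- Configuration transitions of a PDA. -/
def PDA.cstep (M : PDA A) (c : M.S × List M.D) (a : A)
    (c' : M.S × List M.D) : Prop :=
  ∃ d δ δ', c.2 = d :: δ ∧ c'.2 = δ' ++ δ ∧ (c.1, a, d, δ', c'.1) ∈ M.trans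

/-- Accepting configurations of a PDA. -/
def PDA.cacc (M : PDA A) (c : M.S × List M.D) : Prop := c.1 ∈ M.acc

/-- A strong bisimulation between two transition systems. -/
def IsStrongBisim2 {S₁ S₂ : Type*} (tr₁ : S₁ → A → S₁ → Prop) (d₁ : S₁ → Prop)
    (tr₂ : S₂ → A → S₂ → Prop) (d₂ : S₂ → Prop) (R : S₁ → S₂ → Prop) : Prop :=
  ∀ s t, R s t →
    (∀ a s', tr₁ s a s' → ∃ t', tr₂ t a t' ∧ R s' t') ∧
    (∀ a t', tr₂ t a t' → ∃ s', tr₁ s a s' ∧ R s' t') ∧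
    (d₁ s ↔ d₂ t)

def Inert (G : GNF A) (X : G.V) : Prop := G.tflag X ∧ G.summands X = []

open Classical in
noncomputable def flt (G : GNF A) : List G.V → List G.V
  | [] => []
  | X :: ξ => if Inert G X then flt G ξ else X :: flt G ξ

def names (G : GNF A) (ξ : List G.V) : Set G.V := {X | X ∈ ξ}

def enc (G : GNF A) : List G.V → Set G.V → List (G.V × Set G.V)
  | [], _ => []
  | X :: ξ, E => (X, names G ξ ∪ E) :: enc G ξ E

variable (G : GNF A)

lemma flt_append (ξ η : List G.V) : flt G (ξ ++ η) = flt G ξ ++ flt G η := by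
  induction ξ with
  | nil => simp [flt]
  | cons X ξ ih =>
    by_cases h : Inert G X <;> simp [flt, h, ih]

lemma names_append (ξ η : List G.V) : names G (ξ ++ η) = names G ξ ∪ names G η := by
  ext X; simp [names, or_comm]

lemma enc_append (ξ η : List G.V) (E : Set G.V) :
    enc G (ξ ++ η) E = enc G ξ (names G η ∪ E) ++ enc G η E := by
  induction ξ with
  | nil => simp [enc]
  | cons X ξ ih =>
    simp [enc, ih, names_append, Set.union_assoc]

lemma trseq_flt {ξ : List G.V} {a : A} {r : List G.V} (h : TrSeq G ξ a r) :
    ∃ X ρ s2, flt G ξ = X :: ρ ∧ (a, s2) ∈ G.summands X ∧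
      flt G r = flt G s2 ++ ρ := by
  induction ξ with
  | nil => exact h.elim
  | cons X ξ' ih =>
    rcases h with ⟨s, hs, ha, hr⟩ | ⟨ht, hnil, h'⟩
    · have hni : ¬ Inert G X := fun hi => by simp [hi.2] at hs
      refine ⟨X, flt G ξ', s.2, by simp [flt, hni], ?_, ?_⟩
      · rw [← ha]; exact hs
      · subst hr; rw [flt_append]
    · have hi : Inert G X := ⟨ht, hnil⟩
      simpa [flt, hi] using ih h'

lemma trseq_exists {ξ : List G.V} {X : G.V} {ρ : List G.V}
    (hf : flt G ξ = X :: ρ) {a : A} {s2 : List G.V}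
    (hs : (a, s2) ∈ G.summands X) :
    ∃ r, TrSeq G ξ a r ∧ flt G r = flt G s2 ++ ρ := by
  induction ξ with
  | nil => simp [flt] at hf
  | cons Y ξ' ih =>
    by_cases hi : Inert G Y
    · rw [show flt G (Y :: ξ') = flt G ξ' by simp [flt, hi]] at hf
      obtain ⟨r, hr, he⟩ := ih hf
      exact ⟨r, Or.inr ⟨hi.1, hi.2, hr⟩, he⟩
    · rw [show flt G (Y :: ξ') = Y :: flt G ξ' by simp [flt, hi]] at hf
      obtain ⟨rfl, rfl⟩ : Y = X ∧ flt G ξ' = ρ := by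
        simpa using hf
      exact ⟨s2 ++ ξ', Or.inl ⟨(a, s2), hs, rfl, rfl⟩, by rw [flt_append]⟩

lemma dnseq_flt (ξ : List G.V) : DnSeq G ξ ↔ ∀ X ∈ flt G ξ, G.tflag X := by
  induction ξ with
  | nil => simp [DnSeq, flt]
  | cons Y ξ' ih =>
    by_cases hi : Inert G Y
    · simp only [show flt G (Y :: ξ') = flt G ξ' by simp [flt, hi], ← ih]
      simp [DnSeq, hi.1]
    · simp only [show flt G (Y :: ξ') = Y :: flt G ξ' by simp [flt, hi]]
      simp [DnSeq, ← ih, DnSeq]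

/-- The transition set of the constructed PDA. -/
def pdaTrans (G : GNF A) :
    Set (Set G.V × A × (G.V × Set G.V) × List (G.V × Set G.V) × Set G.V) :=
  { t | ∃ (q : Set G.V) (X : G.V) (E : Set G.V) (a : A) (s2 : List G.V),
      (a, s2) ∈ G.summands X ∧
      t = (q, a, (X, E), enc G (flt G s2) E, names G (flt G s2) ∪ E) }

lemma pdaTrans_finite (G : GNF A) : (pdaTrans G).Finite := by
  have := G.finV
  have hsub : pdaTrans G ⊆
      ⋃ (q : Set G.V), ⋃ (X : G.V), ⋃ (E : Set G.V),
        (fun s : A × List G.V =>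
          (q, s.1, (X, E), enc G (flt G s.2) E, names G (flt G s.2) ∪ E)) ''
          {s | s ∈ G.summands X} := by
    rintro t ⟨q, X, E, a, s2, hs, rfl⟩
    simp only [Set.mem_iUnion]
    exact ⟨q, X, E, ⟨(a, s2), hs, rfl⟩⟩
  refine Set.Finite.subset ?_ hsub
  refine Set.finite_iUnion fun q => Set.finite_iUnion fun X => Set.finite_iUnion fun E => ?_
  exact ((G.summands X).finite_toSet).image _

/-- The constructed PDA. -/
noncomputable def mkPDA (G : GNF A) (X₀ : G.V) : PDA A where
  S := Set G.V
  finS := by have := G.finV; infer_instance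
  D := G.V × Set G.V
  finD := by have := G.finV; infer_instance
  trans := pdaTrans G
  finTrans := pdaTrans_finite G
  start := names G (flt G [X₀])
  Z := (X₀, ∅)
  acc := { q : Set G.V | ∀ X ∈ q, G.tflag X }

def Rel (G : GNF A) (X₀ : G.V) (ξ : List G.V)
    (c : Set G.V × List (G.V × Set G.V)) : Prop :=
  (c.1 = names G (flt G ξ) ∧ c.2 = enc G (flt G ξ) ∅) ∨
  (flt G ξ = [] ∧ Inert G X₀ ∧ c = (∅, [(X₀, ∅)]))

lemma mkPDA_bisim (G : GNF A) (X₀ : G.V) :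
    IsStrongBisim2 (S₂ := Set G.V × List (G.V × Set G.V))
      (TrSeq G) (DnSeq G) (mkPDA G X₀).cstep (mkPDA G X₀).cacc (Rel G X₀) := by
  rintro ξ ⟨q, σ⟩ hR
  refine ⟨?_, ?_, ?_⟩
  · -- forward simulation
    rintro a r htr
    obtain ⟨X, ρ, s2, hf, hs, hr⟩ := trseq_flt G htr
    rcases hR with ⟨hq, hσ⟩ | ⟨hnil, _, _⟩
    · dsimp only at hq hσ
      refine ⟨(names G (flt G s2) ∪ (names G ρ ∪ ∅),
        enc G (flt G s2) (names G ρ ∪ ∅) ++ enc G ρ ∅), ?_, ?_⟩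
      · refine ⟨(X, names G ρ ∪ ∅), enc G ρ ∅, enc G (flt G s2) (names G ρ ∪ ∅),
          ?_, rfl, ?_⟩
        · dsimp only
          rw [hσ, hf]
          rfl
        · exact ⟨q, X, names G ρ ∪ ∅, a, s2, hs, by rw [hq]; rfl⟩
      · left
        constructor
        · dsimp only
          simp only [hr, names_append]
          ext Y; simp
        · dsimp only
          simp only [hr, enc_append]
    · rw [hnil] at hf; simp at hf
  · -- backward simulation
    rintro a ⟨q', σ'⟩ ⟨d, δ, δ', h1, h2, h3⟩
    dsimp only at h1 h2 h3
    obtain ⟨q₁, X, E, a₁, s2, hs, heq⟩ := h3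
    obtain ⟨hq₁, ha₁, hd, hδ', hq'⟩ :
        q = q₁ ∧ a = a₁ ∧ d = (X, E) ∧ δ' = enc G (flt G s2) E ∧
          q' = names G (flt G s2) ∪ E := by
      exact ⟨(Prod.mk.inj heq).1, (Prod.mk.inj (Prod.mk.inj heq).2).1,
        (Prod.mk.inj (Prod.mk.inj (Prod.mk.inj heq).2).2).1,
        (Prod.mk.inj (Prod.mk.inj (Prod.mk.inj (Prod.mk.inj heq).2).2).2).1,
        (Prod.mk.inj (Prod.mk.inj (Prod.mk.inj (Prod.mk.inj heq).2).2).2).2⟩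
    subst ha₁ hd hδ' hq'
    rcases hR with ⟨hq, hσ⟩ | ⟨hnil, hi, hc⟩
    · -- canonical configuration
      dsimp only at hq hσ
      rw [hσ] at h1
      rcases hfe : flt G ξ with _ | ⟨Y, ρ⟩
      · rw [hfe] at h1; simp [enc] at h1
      · rw [hfe] at h1
        simp only [enc, List.cons.injEq, Prod.mk.injEq] at h1
        obtain ⟨⟨rfl, rfl⟩, rfl⟩ := h1
        obtain ⟨r, hr, hfr⟩ := trseq_exists G hfe hs
        refine ⟨r, hr, Or.inl ⟨?_, ?_⟩⟩
        · dsimp only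
          simp only [hfr, names_append]
          ext Z; simp
        · dsimp only
          simp only [h2, hfr, enc_append]
          rfl
    · -- dummy configuration: there are no transitions from it
      exfalso
      have hσ' : σ = [(X₀, (∅ : Set G.V))] := congrArg Prod.snd hc
      rw [hσ'] at h1
      replace h1 : (X₀ = X ∧ (∅ : Set G.V) = E) ∧ [] = δ :=
        ⟨Prod.mk.inj (List.cons.inj h1).1, (List.cons.inj h1).2⟩
      obtain ⟨⟨rfl, _⟩, _⟩ := h1
      rw [hi.2] at hs
      exact (List.not_mem_nil hs)
  · -- termination condition
    rcases hR with ⟨hq, _⟩ | ⟨hnil, _, hc⟩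
    · dsimp only at hq
      rw [dnseq_flt]
      show _ ↔ (∀ X ∈ q, G.tflag X)
      rw [hq]
      exact Iff.rfl
    · constructor
      · intro _
        show ∀ X ∈ q, G.tflag X
        have : q = (∅ : Set G.V) := congrArg Prod.fst hc
        rw [this]; intro X hX; exact absurd hX (Set.notMem_empty X)
      · intro _
        rw [dnseq_flt, hnil]
        simp


/-- For every context-free process, given by a finite guarded recursive
specification in Greibach normal form over TSP• with initial name `X₀`, there
is a pushdown automaton `M` whose pushdown process is strongly bisimilar to
the transition system of `X₀`. -/
theorem cfp_to_pda {A : Type} (G : GNF A) (X₀ : G.V) :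
    ∃ M : PDA A, ∃ R : List G.V → (M.S × List M.D) → Prop,
      IsStrongBisim2 (TrSeq G) (DnSeq G) M.cstep M.cacc R ∧
      R [X₀] (M.start, [M.Z]) := by
  refine ⟨mkPDA G X₀, Rel G X₀, mkPDA_bisim G X₀, ?_⟩
  show Rel G X₀ [X₀] (names G (flt G [X₀]), [(X₀, (∅ : Set G.V))])
  by_cases hi : Inert G X₀
  · right
    refine ⟨by simp [flt, hi], hi, ?_⟩
    have h1 : flt G [X₀] = [] := by simp [flt, hi]
    rw [h1]
    have h2 : names G ([] : List G.V) = (∅ : Set G.V) := by ext Y; simp [names]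
    rw [h2]
  · left
    have h1 : flt G [X₀] = [X₀] := by simp [flt, hi]
    refine ⟨rfl, ?_⟩
    show [((X₀ : G.V), (∅ : Set G.V))] = enc G (flt G [X₀]) ∅
    rw [h1]
    simp only [enc]
    congr 2
    ext Y; simp [names]

end Stmt13
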